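/- Let Ω ⊆ ℂ be open, I ⊆ ℝ an interval containing 0, and β ∈ ℝ. Let U : I × Ω → ℂ be continuously differentiable and holomorphic in the second variable, satisfying for all (t,z) ∈ I × Ω the harmonic-potential complex Burgers equation ∂_t U(t,z) = (β/2)U(t,z)·∂_z U(t,z) + z·∂_z U(t,z) + U(t,z). Let z : I → Ω be differentiable with z′(t) = −(β/2)U(t,z(t)) − z(t). Then for all t ∈ I: U(t,z(t)) = e^t·U(0,z(0)) and z(t) = z(0)·e^{−t} − (β/2)·U(0,z(0))·sinh t. -/

import Mathlib

/-- If `φ` is continuous on `[a,b]` and has zero derivative on `(a,b)`,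
then `φ` is constant on `[a,b]`. -/
lemma const_on_Icc_of_hasDerivAt_zero {φ : ℝ → ℂ} {a b : ℝ} (hab : a < b)
    (hc : ContinuousOn φ (Set.Icc a b))
    (hd : ∀ s ∈ Set.Ioo a b, HasDerivAt φ 0 s) :
    ∀ x ∈ Set.Icc a b, φ x = φ b := by
  have hioo : ∀ x ∈ Set.Ioo a b, φ x = φ b := by
    intro x hx
    have hsub : Set.Icc x b ⊆ Set.Icc a b := Set.Icc_subset_Icc hx.1.le le_rfl
    have := constant_of_has_deriv_right_zero (f := φ) (a := x) (b := b)
      (hc.mono hsub) (fun y hy => (hd y ⟨lt_of_lt_of_le hx.1 hy.1, hy.2⟩).hasDerivWithinAt)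
    exact (this b ⟨hx.2.le, le_rfl⟩).symm
  have hA : φ a = φ b := by
    have hclos : a ∈ closure (Set.Ioo a b) := by
      rw [closure_Ioo hab.ne]; exact ⟨le_rfl, hab.le⟩
    have hne : (nhdsWithin a (Set.Ioo a b)).NeBot :=
      mem_closure_iff_nhdsWithin_neBot.mp hclos
    have h1 : Filter.Tendsto φ (nhdsWithin a (Set.Ioo a b)) (nhds (φ a)) :=
      (hc a ⟨le_rfl, hab.le⟩).mono_left (nhdsWithin_mono a Set.Ioo_subset_Icc_self)
    have h2 : Filter.Tendsto φ (nhdsWithin a (Set.Ioo a b)) (nhds (φ b)) := by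
      refine Filter.Tendsto.congr' ?_ tendsto_const_nhds
      filter_upwards [self_mem_nhdsWithin] with y hy
      exact (hioo y hy).symm
    exact tendsto_nhds_unique h1 h2
  intro x hx
  rcases eq_or_lt_of_le hx.1 with h | h
  · exact h ▸ hA
  · rcases eq_or_lt_of_le hx.2 with h' | h'
    · rw [h']
    · exact hioo x ⟨h, h'⟩

set_option maxHeartbeats 1000000 in
/-- for the harmonic-potential complex Burgers equation
`∂ₜU = (β/2) U ∂_z U + z ∂_z U + U`, along a characteristic
`z' = -(β/2) U(t, z) - z`, the solution grows like `e^t`: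
`U (t, z t) = e^t U (0, z 0)`, and the characteristic is
`z t = z 0 e^{-t} - (β/2) U (0, z 0) sinh t`. -/
theorem stmt_6 (Ω : Set ℂ) (hΩ : IsOpen Ω) (I : Set ℝ) (hIconn : I.OrdConnected)
    (h0 : (0 : ℝ) ∈ I) (β : ℝ) (U : ℝ → ℂ → ℂ)
    (hUC1 : ContDiffOn ℝ 1 (fun p : ℝ × ℂ => U p.1 p.2) (I ×ˢ Ω))
    (hUhol : ∀ t ∈ I, ∀ w ∈ Ω, DifferentiableAt ℂ (U t) w)
    (hPDE : ∀ t ∈ I, ∀ w ∈ Ω,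
      deriv (fun τ : ℝ => U τ w) t =
        ((β : ℂ) / 2) * U t w * deriv (U t) w + w * deriv (U t) w + U t w)
    (z : ℝ → ℂ) (hzΩ : ∀ t ∈ I, z t ∈ Ω)
    (hzder : ∀ t ∈ I, HasDerivAt z (-((β : ℂ) / 2) * U t (z t) - z t) t) :
    ∀ t ∈ I,
      U t (z t) = Complex.exp (t : ℂ) * U 0 (z 0) ∧
      z t = z 0 * Complex.exp (-(t : ℂ))
        - ((β : ℂ) / 2) * U 0 (z 0) * Complex.sinh (t : ℂ) := by
  intro t ht
  rcases eq_or_ne t 0 with rfl | htne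
  · simp
  have ha : min 0 t ∈ I := by
    rcases le_total (0:ℝ) t with h | h
    · rwa [min_eq_left h]
    · rwa [min_eq_right h]
  have hb : max 0 t ∈ I := by
    rcases le_total (0:ℝ) t with h | h
    · rwa [max_eq_right h]
    · rwa [max_eq_left h]
  set a := min 0 t with hadef
  set b := max 0 t with hbdef
  have hab : a < b := min_lt_max.mpr (Ne.symm htne)
  have hsubI : Set.Icc a b ⊆ I := hIconn.out ha hb
  have h0m : (0:ℝ) ∈ Set.Icc a b := ⟨min_le_left _ _, le_max_left _ _⟩
  have htm : t ∈ Set.Icc a b := ⟨min_le_right _ _, le_max_right _ _⟩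
  set g : ℝ → ℂ := fun τ => U τ (z τ) with hgdef
  -- continuity of z and g on [a,b]
  have hzcont : ContinuousOn z (Set.Icc a b) := fun s hs =>
    ((hzder s (hsubI hs)).continuousAt).continuousWithinAt
  have hgcont : ContinuousOn g (Set.Icc a b) := by
    have hF := hUC1.continuousOn
    have hcurve : ContinuousOn (fun s : ℝ => (s, z s)) (Set.Icc a b) :=
      (continuousOn_id).prodMk hzcont
    exact hF.comp hcurve (fun s hs => ⟨hsubI hs, hzΩ s (hsubI hs)⟩)
  -- the key derivative computation: g' = g on the open interval
  have hgder : ∀ s ∈ Set.Ioo a b, HasDerivAt g (g s) s := by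
    intro s hs
    have hsI : s ∈ I := hsubI (Set.Ioo_subset_Icc_self hs)
    have hzsΩ : z s ∈ Ω := hzΩ s hsI
    have hO : (Set.Ioo a b ×ˢ Ω) ∈ nhds ((s : ℝ), z s) :=
      (isOpen_Ioo.prod hΩ).mem_nhds ⟨hs, hzsΩ⟩
    have hmem : (I ×ˢ Ω) ∈ nhds ((s : ℝ), z s) :=
      Filter.mem_of_superset hO
        (Set.prod_mono (fun u hu => hsubI (Set.Ioo_subset_Icc_self hu)) subset_rfl)
    have hFd : DifferentiableAt ℝ (fun p : ℝ × ℂ => U p.1 p.2) ((s : ℝ), z s) :=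
      (hUC1.contDiffAt hmem).differentiableAt one_ne_zero
    set L := fderiv ℝ (fun p : ℝ × ℂ => U p.1 p.2) ((s : ℝ), z s) with hLdef
    have hFA : HasFDerivAt (fun p : ℝ × ℂ => U p.1 p.2) L ((s : ℝ), z s) := hFd.hasFDerivAt
    have hzd := hzder s hsI
    have hcurve : HasDerivAt (fun τ : ℝ => ((τ : ℝ), z τ))
        ((1:ℝ), -((β : ℂ)/2) * U s (z s) - z s) s := (hasDerivAt_id s).prodMk hzd
    have hgd : HasDerivAt g (L ((1:ℝ), -((β : ℂ)/2) * U s (z s) - z s)) s :=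
      by have h := hFA.comp_hasDerivAt s hcurve; exact h
    -- identify the time-partial L (1, 0)
    have hpt : HasDerivAt (fun τ : ℝ => U τ (z s)) (L ((1:ℝ), (0:ℂ))) s :=
      by have h := hFA.comp_hasDerivAt s ((hasDerivAt_id s).prodMk (hasDerivAt_const s (z s))); exact h
    have hL10 : L ((1:ℝ), (0:ℂ)) =
        ((β : ℂ) / 2) * U s (z s) * deriv (U s) (z s)
          + (z s) * deriv (U s) (z s) + U s (z s) := by
      rw [← hpt.deriv]; exact hPDE s hsI (z s) hzsΩ
    -- identify the space-partial L (0, v)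
    have hd2 : HasDerivAt (U s) (deriv (U s) (z s)) (z s) :=
      (hUhol s hsI (z s) hzsΩ).hasDerivAt
    have hincl : HasFDerivAt (fun v : ℂ => ((s : ℝ), v))
        (((0 : ℂ →L[ℝ] ℝ)).prod (ContinuousLinearMap.id ℝ ℂ)) (z s) :=
      (hasFDerivAt_const (s : ℝ) (z s)).prodMk (hasFDerivAt_id (z s))
    have h1 : HasFDerivAt (U s)
        (L.comp (((0 : ℂ →L[ℝ] ℝ)).prod (ContinuousLinearMap.id ℝ ℂ))) (z s) :=
      hFA.comp (z s) hincl
    have h2 : HasFDerivAt (U s)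
        (ContinuousLinearMap.restrictScalars ℝ
          (ContinuousLinearMap.smulRight (1 : ℂ →L[ℂ] ℂ) (deriv (U s) (z s)))) (z s) :=
      (hd2.hasFDerivAt).restrictScalars ℝ
    have hkey := h1.unique h2
    have hL0 : ∀ v : ℂ, L ((0:ℝ), v) = v * deriv (U s) (z s) := by
      intro v
      have hv : L ((0:ℝ), v) =
          (L.comp (((0 : ℂ →L[ℝ] ℝ)).prod (ContinuousLinearMap.id ℝ ℂ))) v := by
        simp
      rw [hv, hkey]
      simp [smul_eq_mul]
    have hsplit : ((1:ℝ), -((β : ℂ)/2) * U s (z s) - z s)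
        = ((1:ℝ), (0:ℂ)) + ((0:ℝ), -((β : ℂ)/2) * U s (z s) - z s) := by simp
    have hval : L ((1:ℝ), -((β : ℂ)/2) * U s (z s) - z s) = g s := by
      rw [hsplit, map_add, hL10, hL0]
      show _ = U s (z s)
      ring
    rw [hval] at hgd
    exact hgd
  -- Part 1 : U (t, z t) = e^t U(0, z 0) on [a,b]
  set φ : ℝ → ℂ := fun s => Complex.exp (-(s : ℂ)) * g s with hφdef
  have hφcont : ContinuousOn φ (Set.Icc a b) := by
    apply ContinuousOn.mul _ hgcont
    exact (Complex.continuous_exp.comp (Complex.continuous_ofReal.neg)).continuousOn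
  have hφder : ∀ s ∈ Set.Ioo a b, HasDerivAt φ 0 s := by
    intro s hs
    have hexp : HasDerivAt (fun x : ℝ => Complex.exp (-(x : ℂ)))
        (-Complex.exp (-(s : ℂ))) s := by
      have h1 : HasDerivAt (fun w : ℂ => Complex.exp (-w))
          (Complex.exp (-(s:ℂ)) * (-1)) (s : ℂ) :=
        (Complex.hasDerivAt_exp (-(s:ℂ))).comp (s : ℂ) (hasDerivAt_neg (s : ℂ))
      have h2 := h1.comp_ofReal
      simpa using h2
    have := hexp.mul (hgder s hs)
    have h0 : -Complex.exp (-(s : ℂ)) * g s + Complex.exp (-(s : ℂ)) * g s = 0 := by ring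
    rw [h0] at this
    exact this
  have hφconst := const_on_Icc_of_hasDerivAt_zero hab hφcont hφder
  have hφt : φ t = φ 0 := (hφconst t htm).trans (hφconst 0 h0m).symm
  have hgval : ∀ s ∈ Set.Icc a b, U s (z s) = Complex.exp (s : ℂ) * U 0 (z 0) := by
    intro s hsm
    have hφs : φ s = φ 0 := (hφconst s hsm).trans (hφconst 0 h0m).symm
    have hφ0 : φ 0 = U 0 (z 0) := by simp [hφdef, hgdef]
    rw [hφ0] at hφs
    have he : Complex.exp (s : ℂ) * Complex.exp (-(s : ℂ)) = 1 := by
      rw [← Complex.exp_add]; simp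
    have hφs' : Complex.exp (-(s : ℂ)) * U s (z s) = U 0 (z 0) := hφs
    linear_combination Complex.exp (s : ℂ) * hφs' - U s (z s) * he
  have part1 : U t (z t) = Complex.exp (t : ℂ) * U 0 (z 0) := hgval t htm
  -- Part 2 : the characteristic formula
  set c0 : ℂ := U 0 (z 0) with hc0def
  set ψ : ℝ → ℂ := fun s => Complex.exp (s : ℂ) * z s
      + ((β : ℂ)/2) * c0 * (Complex.exp (s : ℂ) * Complex.sinh (s : ℂ)) with hψdef
  have hexpR : ∀ s : ℝ, HasDerivAt (fun x : ℝ => Complex.exp (x : ℂ))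
      (Complex.exp (s : ℂ)) s := fun s => (Complex.hasDerivAt_exp (s:ℂ)).comp_ofReal
  have hsinhR : ∀ s : ℝ, HasDerivAt (fun x : ℝ => Complex.sinh (x : ℂ))
      (Complex.cosh (s : ℂ)) s := fun s => (Complex.hasDerivAt_sinh (s:ℂ)).comp_ofReal
  have hψcont : ContinuousOn ψ (Set.Icc a b) := by
    apply ContinuousOn.add
    · exact ((Complex.continuous_exp.comp Complex.continuous_ofReal).continuousOn).mul hzcont
    · apply Continuous.continuousOn
      exact continuous_const.mul
        ((Complex.continuous_exp.comp Complex.continuous_ofReal).mul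
          (Complex.continuous_sinh.comp Complex.continuous_ofReal))
  have hψder : ∀ s ∈ Set.Ioo a b, HasDerivAt ψ 0 s := by
    intro s hs
    have hsI : s ∈ I := hsubI (Set.Ioo_subset_Icc_self hs)
    have hzd := hzder s hsI
    have h1 : HasDerivAt (fun x : ℝ => Complex.exp (x : ℂ) * z x)
        (Complex.exp (s : ℂ) * z s
          + Complex.exp (s : ℂ) * (-((β : ℂ)/2) * U s (z s) - z s)) s :=
      (hexpR s).mul hzd
    have h2 : HasDerivAt (fun x : ℝ => Complex.exp (x : ℂ) * Complex.sinh (x : ℂ))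
        (Complex.exp (s : ℂ) * Complex.sinh (s : ℂ)
          + Complex.exp (s : ℂ) * Complex.cosh (s : ℂ)) s :=
      (hexpR s).mul (hsinhR s)
    have h3 := h1.add ((h2.const_mul (((β : ℂ)/2) * c0)))
    have hgs : U s (z s) = Complex.exp (s : ℂ) * c0 :=
      hgval s (Set.Ioo_subset_Icc_self hs)
    have hsc := Complex.sinh_add_cosh (s : ℂ)
    have hzero : Complex.exp (s : ℂ) * z s
        + Complex.exp (s : ℂ) * (-((β : ℂ)/2) * U s (z s) - z s)
        + ((β : ℂ)/2) * c0 * (Complex.exp (s : ℂ) * Complex.sinh (s : ℂ)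
          + Complex.exp (s : ℂ) * Complex.cosh (s : ℂ)) = 0 := by
      rw [hgs]
      linear_combination ((β : ℂ)/2) * c0 * Complex.exp (s : ℂ) * hsc
    rw [hzero] at h3
    exact h3
  have hψconst := const_on_Icc_of_hasDerivAt_zero hab hψcont hψder
  have hψt : ψ t = ψ 0 := (hψconst t htm).trans (hψconst 0 h0m).symm
  have hψ0 : ψ 0 = z 0 := by simp [hψdef]
  rw [hψ0] at hψt
  have he : Complex.exp (-(t : ℂ)) * Complex.exp (t : ℂ) = 1 := by
    rw [← Complex.exp_add]; simp
  refine ⟨part1, ?_⟩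
  have hψt' : Complex.exp (t : ℂ) * z t
      + ((β : ℂ)/2) * c0 * (Complex.exp (t : ℂ) * Complex.sinh (t : ℂ)) = z 0 := hψt
  linear_combination Complex.exp (-(t : ℂ)) * hψt'
    - (z t + ((β : ℂ)/2) * c0 * Complex.sinh (t : ℂ)) * he
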